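/- For a completely regular Hausdorff space X, the following are equivalent: (a) X is an almost P-space; (b) for every x ∈ X, the maximal ideal M_x = {f ∈ C(X) : f(x) = 0} is an ℵ₀-z°-ideal; (c) every M_x is a countable strongly annihilated ideal of C(X). -/

import Mathlib

open ContinuousMap

/-- An ideal `I` is countable strongly annihilated if for each countable subset `S ⊆ I`
and each `b ∉ I` there exists `c` with `c * a = 0` for all `a ∈ S` but `c * b ≠ 0`. -/
def CountableStronglyAnnihilated {R : Type*} [CommRing R] (I : Ideal R) : Prop :=
  ∀ S : Set R, S.Countable → S ⊆ I → ∀ b ∉ I, ∃ c : R, (∀ a ∈ S, c * a = 0) ∧ c * b ≠ 0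

/-- The fixed maximal ideal `M_x = {f ∈ C(X) : f x = 0}`. -/
def Mx {X : Type*} [TopologicalSpace X] (x : X) : Ideal C(X, ℝ) where
  carrier := {f | f x = 0}
  zero_mem' := rfl
  add_mem' := by
    intro f g hf hg
    simp only [Set.mem_setOf_eq, ContinuousMap.add_apply] at *
    rw [hf, hg, add_zero]
  smul_mem' := by
    intro c f hf
    simp only [Set.mem_setOf_eq] at *
    simp [hf]

lemma mem_Mx_iff {X : Type*} [TopologicalSpace X] (x : X) (f : C(X, ℝ)) :
    f ∈ Mx x ↔ f x = 0 := Iff.rfl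

/-- `C(X, ℝ)` has no nonzero nilpotents. -/
lemma CX_nilpotent_eq_zero {X : Type*} [TopologicalSpace X] {f : C(X, ℝ)}
    (hf : IsNilpotent f) : f = 0 := by
  obtain ⟨n, hn⟩ := hf
  ext z
  have hz : (f z) ^ n = 0 := by
    have := congrArg (fun u : C(X, ℝ) => u z) hn
    simpa using this
  rcases n with _ | n
  · simp at hz
  · exact pow_eq_zero_iff (Nat.succ_ne_zero n) |>.mp hz

/-- Elements of a minimal prime are "almost" annihilated by something outside it. -/
lemma exists_annihilator_of_mem_minimalPrime {R : Type*} [CommRing R] {P : Ideal R}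
    (hP : P ∈ minimalPrimes R) {a : R} (ha : a ∈ P) :
    ∃ s ∉ P, ∃ n : ℕ, s * a ^ n = 0 := by
  haveI hPp : P.IsPrime := hP.1.1
  set L := Localization P.primeCompl
  have hmem : algebraMap R L a ∈ IsLocalRing.maximalIdeal L :=
    (IsLocalization.AtPrime.to_map_mem_maximal_iff L P a).mpr ha
  have hnil : IsNilpotent (algebraMap R L a) :=
    haveI := Ring.KrullDimLE.of_isLocalization P hP L
    Ring.KrullDimLE.isNilpotent_iff_mem_maximalIdeal.mpr hmem
  obtain ⟨n, hn⟩ := hnil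
  rw [← map_pow] at hn
  obtain ⟨m, hm⟩ := (IsLocalization.map_eq_zero_iff P.primeCompl L (a ^ n)).mp hn
  exact ⟨(m : R), m.2, n, hm⟩

/-- `X` is an almost P-space iff every `M_x` is an `ℵ₀-z°`-ideal iff every `M_x` is a
countable strongly annihilated ideal of `C(X)`. -/
theorem stmt18 {X : Type*} [TopologicalSpace X] [T2Space X] [CompletelyRegularSpace X] :
    ((∀ f : C(X, ℝ), {x | f x = 0}.Nonempty → (interior {x | f x = 0}).Nonempty) ↔
      (∀ x : X, ∀ S : Set C(X, ℝ), S.Countable → S ⊆ Mx x → ∀ g : C(X, ℝ),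
        (∀ P ∈ minimalPrimes C(X, ℝ), S ⊆ ↑P → g ∈ P) → g ∈ Mx x)) ∧
    ((∀ x : X, ∀ S : Set C(X, ℝ), S.Countable → S ⊆ Mx x → ∀ g : C(X, ℝ),
        (∀ P ∈ minimalPrimes C(X, ℝ), S ⊆ ↑P → g ∈ P) → g ∈ Mx x) ↔
      (∀ x : X, CountableStronglyAnnihilated (Mx x))) := by
  set A : Prop :=
    (∀ f : C(X, ℝ), {x | f x = 0}.Nonempty → (interior {x | f x = 0}).Nonempty) with hA
  set B : Prop :=
    (∀ x : X, ∀ S : Set C(X, ℝ), S.Countable → S ⊆ Mx x → ∀ g : C(X, ℝ),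
        (∀ P ∈ minimalPrimes C(X, ℝ), S ⊆ ↑P → g ∈ P) → g ∈ Mx x) with hB
  set C : Prop := (∀ x : X, CountableStronglyAnnihilated (Mx x)) with hC
  -- (c) → (b) : pure commutative algebra in the reduced ring C(X,ℝ)
  have hCB : C → B := by
    intro hc x S hScnt hSsub g hg
    by_contra hgx
    obtain ⟨c, hcS, hcg⟩ := hc x S hScnt hSsub g hgx
    have hnotnil : ¬ IsNilpotent (c * g) := fun h => hcg (CX_nilpotent_eq_zero h)
    rw [nilpotent_iff_mem_prime] at hnotnil
    push_neg at hnotnil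
    obtain ⟨J, hJ, hcgJ⟩ := hnotnil
    haveI := hJ
    obtain ⟨Q, hQmin, hQJ⟩ := Ideal.exists_minimalPrimes_le (I := (⊥ : Ideal C(X, ℝ))) bot_le
      (J := J)
    haveI hQp : Q.IsPrime := hQmin.1.1
    have hcgQ : c * g ∉ Q := fun h => hcgJ (hQJ h)
    have hcQ : c ∉ Q := fun h => hcgQ (Ideal.mul_mem_right _ _ h)
    have hSQ : S ⊆ ↑Q := by
      intro a haS
      rcases hQp.mem_or_mem (show c * a ∈ Q by rw [hcS a haS]; exact Q.zero_mem) with h | h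
      · exact absurd h hcQ
      · exact h
    have hgQ : g ∈ Q := hg Q hQmin hSQ
    exact hcgQ (Ideal.mul_mem_left _ _ hgQ)
  -- (b) → (a)
  have hBA : B → A := by
    intro hb f hfne
    by_contra hint
    rw [Set.not_nonempty_iff_eq_empty] at hint
    obtain ⟨x, hx⟩ := hfne
    have h1 : (1 : C(X, ℝ)) ∈ Mx x := by
      apply hb x {f} (Set.countable_singleton f)
      · intro a ha
        rw [Set.mem_singleton_iff] at ha
        subst ha
        exact hx
      · intro P hP hfP
        exfalso
        obtain ⟨s, hsP, n, hsf⟩ := exists_annihilator_of_mem_minimalPrime hP (hfP rfl)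
        have hs0 : s ≠ 0 := fun h => hsP (h ▸ P.zero_mem)
        rcases n with _ | n
        · apply hs0
          simpa using hsf
        · obtain ⟨z, hz⟩ : ∃ z, s z ≠ 0 := by
            by_contra h
            push_neg at h
            exact hs0 (ContinuousMap.ext h)
          have hVopen : IsOpen {w | s w ≠ 0} :=
            isOpen_compl_singleton.preimage s.continuous
          have hVsub : {w | s w ≠ 0} ⊆ {w | f w = 0} := by
            intro w hw
            have : s w * (f w) ^ (n + 1) = 0 := by
              have := congrArg (fun u : C(X, ℝ) => u w) hsf
              simpa using this
            have hfw : (f w) ^ (n + 1) = 0 := by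
              rcases mul_eq_zero.mp this with h | h
              · exact absurd h hw
              · exact h
            exact pow_eq_zero_iff (Nat.succ_ne_zero n) |>.mp hfw
          have : z ∈ interior {w | f w = 0} :=
            interior_maximal hVsub hVopen hz
          rw [hint] at this
          exact this
    exact one_ne_zero h1
  -- (a) → (c)
  have hAC : A → C := by
    intro ha x S hScnt hSsub g hgx
    have hgx0 : g x ≠ 0 := hgx
    rcases S.eq_empty_or_nonempty with rfl | hSne
    · refine ⟨1, by simp, ?_⟩
      intro h
      apply hgx0
      have := congrArg (fun u : C(X, ℝ) => u x) h
      simpa using this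
    obtain ⟨u, rfl⟩ := hScnt.exists_eq_range hSne
    set t : ℝ := |g x| / 2 with ht
    have htpos : 0 < t := by positivity
    -- the series of functions
    set φ : ℕ → X → ℝ := fun n z => (1 / 2 : ℝ) ^ n * min |u n z| 1 with hφ
    have hφcont : ∀ n, Continuous (φ n) := fun n =>
      continuous_const.mul ((u n).continuous.abs.min continuous_const)
    have hφnonneg : ∀ n z, 0 ≤ φ n z := fun n z => by
      apply mul_nonneg (by positivity)
      exact le_min (abs_nonneg _) zero_le_one
    have hφbound : ∀ n z, ‖φ n z‖ ≤ (1 / 2 : ℝ) ^ n := fun n z => by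
      rw [Real.norm_eq_abs, abs_of_nonneg (hφnonneg n z)]
      calc (1 / 2 : ℝ) ^ n * min |u n z| 1 ≤ (1 / 2 : ℝ) ^ n * 1 := by
            apply mul_le_mul_of_nonneg_left (min_le_right _ _) (by positivity)
        _ = (1 / 2 : ℝ) ^ n := mul_one _
    have hgeo : Summable fun n : ℕ => (1 / 2 : ℝ) ^ n := summable_geometric_two
    have hφsummable : ∀ z, Summable fun n => φ n z := fun z =>
      Summable.of_nonneg_of_le (fun n => hφnonneg n z)
        (fun n => (Real.le_norm_self _).trans (hφbound n z)) hgeo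
    have hFcont : Continuous fun z => ∑' n, φ n z :=
      continuous_tsum hφcont hgeo hφbound
    set G : C(X, ℝ) := ⟨fun z => (∑' n, φ n z) + max (t - |g z|) 0,
      hFcont.add ((continuous_const.sub g.continuous.abs).max continuous_const)⟩ with hG
    have hFnonneg : ∀ z, 0 ≤ ∑' n, φ n z := fun z =>
      tsum_nonneg (fun n => hφnonneg n z)
    -- G x = 0
    have hGx : G x = 0 := by
      have h1 : ∀ n, φ n x = 0 := by
        intro n
        have : u n x = 0 := hSsub ⟨n, rfl⟩
        simp [hφ, this]
      have h2 : (∑' n, φ n x) = 0 := by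
        simp only [h1]; exact tsum_zero
      have h3 : max (t - |g x|) 0 = 0 := by
        apply max_eq_right
        rw [ht]
        have : 0 ≤ |g x| := abs_nonneg _
        linarith
      show (∑' n, φ n x) + max (t - |g x|) 0 = 0
      rw [h2, h3, add_zero]
    -- analysis of the zero set of G
    have hGzero : ∀ z, G z = 0 → (∀ n, u n z = 0) ∧ t ≤ |g z| := by
      intro z hz
      have hz' : (∑' n, φ n z) + max (t - |g z|) 0 = 0 := hz
      have hmax : 0 ≤ max (t - |g z|) 0 := le_max_right _ _
      have hF0 : (∑' n, φ n z) = 0 := le_antisymm (by linarith [hFnonneg z]) (hFnonneg z)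
      have hM0 : max (t - |g z|) 0 = 0 := by linarith [hFnonneg z]
      constructor
      · intro n
        have hle : φ n z ≤ ∑' m, φ m z := Summable.le_tsum (hφsummable z) n (fun m _ => hφnonneg m z)
        have : φ n z = 0 := le_antisymm (hF0 ▸ hle) (hφnonneg n z)
        rw [hφ] at this
        have hmin : min |u n z| 1 = 0 := by
          have hpow : (0:ℝ) < (1 / 2 : ℝ) ^ n := by positivity
          rcases mul_eq_zero.mp this with h | h
          · exact absurd h hpow.ne'
          · exact h
        have : |u n z| = 0 := by
          rcases min_eq_iff.mp hmin with ⟨h, _⟩ | ⟨h, _⟩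
          · exact h
          · linarith
        exact abs_eq_zero.mp this
      · have : t - |g z| ≤ 0 := by
          by_contra hcon
          push_neg at hcon
          rw [max_eq_left hcon.le] at hM0
          linarith
        linarith
    -- apply almost P-space to G
    obtain ⟨y, hy⟩ := ha G ⟨x, hGx⟩
    set U := interior {z | G z = 0} with hU
    have hUopen : IsOpen U := isOpen_interior
    have hUsub : U ⊆ {z | G z = 0} := interior_subset
    -- complete regularity: bump function at y supported in U
    obtain ⟨v, hvcont, hvy, hvK⟩ :=
      CompletelyRegularSpace.completely_regular y Uᶜ
        (isClosed_compl_iff.mpr hUopen) (by simpa using hy)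
    set c : C(X, ℝ) := ⟨fun z => 1 - (v z : ℝ),
      continuous_const.sub (continuous_subtype_val.comp hvcont)⟩ with hc
    refine ⟨c, ?_, ?_⟩
    · rintro a ⟨n, rfl⟩
      ext z
      show c z * u n z = 0
      by_cases hzU : z ∈ U
      · have : u n z = 0 := (hGzero z (hUsub hzU)).1 n
        rw [this, mul_zero]
      · have : v z = 1 := hvK hzU
        show (1 - (v z : ℝ)) * u n z = 0
        rw [this]
        norm_num
    · intro hzero
      have hcy : c y = 1 := by
        show (1 - (v y : ℝ)) = 1
        rw [hvy]
        norm_num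
      have hgy : g y ≠ 0 := by
        have := (hGzero y (hUsub hy)).2
        intro h
        rw [h, abs_zero] at this
        linarith
      have := congrArg (fun u : C(X, ℝ) => u y) hzero
      simp only [ContinuousMap.mul_apply, ContinuousMap.zero_apply] at this
      rw [show c y * g y = g y by rw [hcy, one_mul]] at this
      exact hgy this
  exact ⟨⟨fun ha => hCB (hAC ha), hBA⟩, ⟨fun hb => hAC (hBA hb), fun hc => hCB hc⟩⟩
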